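/- φ̃(n) = 1 if and only if n ∈ {1, 2, 3, 4, 6, 8, 12, 18, 24, 30}. -/
import Mathlib


/-- φ̃(n): number of m with 1 ≤ m ≤ n, gcd(m,n)=1, m not prime. -/
def phiT (n : ℕ) : ℕ :=
  ((Finset.Icc 1 n).filter (fun m => Nat.gcd m n = 1 ∧ ¬ m.Prime)).card

/-- The product of the first k primes. -/
noncomputable def primorialN (k : ℕ) : ℕ := ∏ i ∈ Finset.range k, Nat.nth Nat.Prime i

lemma nth_prime_0 : Nat.nth Nat.Prime 0 = 2 := by
  have := Nat.nth_count (p := Nat.Prime) (by norm_num : Nat.Prime 2); simpa using this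

lemma nth_prime_1 : Nat.nth Nat.Prime 1 = 3 := by
  have := Nat.nth_count (p := Nat.Prime) (by norm_num : Nat.Prime 3); simpa using this

lemma nth_prime_2 : Nat.nth Nat.Prime 2 = 5 := by
  have := Nat.nth_count (p := Nat.Prime) (by norm_num : Nat.Prime 5); simpa using this

lemma nth_prime_3 : Nat.nth Nat.Prime 3 = 7 := by
  have := Nat.nth_count (p := Nat.Prime) (by norm_num : Nat.Prime 7); simpa using this

lemma nth_prime_4 : Nat.nth Nat.Prime 4 = 11 := by
  have := Nat.nth_count (p := Nat.Prime) (by norm_num : Nat.Prime 11)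
  have hc : Nat.count Nat.Prime 11 = 4 := by decide
  rwa [hc] at this

lemma primorialN_4 : primorialN 4 = 210 := by
  simp [primorialN, Finset.prod_range_succ, nth_prime_0, nth_prime_1, nth_prime_2, nth_prime_3]

lemma primorial_lower : ∀ k, 4 ≤ k → (Nat.nth Nat.Prime k) ^ 2 ≤ primorialN k := by
  intro k hk
  induction k with
  | zero => omega
  | succ k ih =>
    have hinf := Nat.infinite_setOf_prime
    rcases eq_or_lt_of_le hk with h4 | h4
    · rw [← h4, nth_prime_4, primorialN_4]; norm_num
    · have hk4 : 4 ≤ k := by omega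
      have IH := ih hk4
      have hpk : (Nat.nth Nat.Prime k).Prime := Nat.prime_nth_prime k
      obtain ⟨r, hr, hr1, hr2⟩ :=
        Nat.exists_prime_lt_and_le_two_mul (Nat.nth Nat.Prime k) hpk.pos.ne'
      have hle : Nat.nth Nat.Prime (k + 1) ≤ r := by
        have h1 : Nat.nth Nat.Prime k < Nat.nth Nat.Prime (Nat.count Nat.Prime r) := by
          rwa [Nat.nth_count hr]
        have h2 : k < Nat.count Nat.Prime r := (Nat.nth_lt_nth hinf).mp h1
        calc Nat.nth Nat.Prime (k + 1) ≤ Nat.nth Nat.Prime (Nat.count Nat.Prime r) :=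
              (Nat.nth_le_nth hinf).mpr (by omega)
          _ = r := Nat.nth_count hr
      have h11 : 11 ≤ Nat.nth Nat.Prime k := by
        calc 11 = Nat.nth Nat.Prime 4 := nth_prime_4.symm
          _ ≤ Nat.nth Nat.Prime k := (Nat.nth_le_nth hinf).mpr hk4
      have hprim : primorialN (k + 1) = primorialN k * Nat.nth Nat.Prime k :=
        Finset.prod_range_succ _ _
      set p := Nat.nth Nat.Prime k with hp
      calc (Nat.nth Nat.Prime (k + 1)) ^ 2 ≤ r ^ 2 := Nat.pow_le_pow_left hle 2
        _ ≤ (2 * p) ^ 2 := Nat.pow_le_pow_left hr2 2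
        _ = 4 * p ^ 2 := by ring
        _ ≤ p * p ^ 2 := Nat.mul_le_mul_right _ (by omega)
        _ = p ^ 2 * p := by ring
        _ ≤ primorialN k * p := Nat.mul_le_mul_right _ IH
        _ = primorialN (k + 1) := hprim.symm

lemma exists_comp (n : ℕ) (hn : 0 < n) (h : 210 ∣ n) :
    ∃ m, 2 ≤ m ∧ m ≤ n ∧ Nat.gcd m n = 1 ∧ ¬ m.Prime := by
  have hinf := Nat.infinite_setOf_prime
  have hex : ∃ k, ¬ Nat.nth Nat.Prime k ∣ n := by
    obtain ⟨q, hq1, hq⟩ := Nat.exists_infinite_primes (n + 1)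
    refine ⟨Nat.count Nat.Prime q, ?_⟩
    rw [Nat.nth_count hq]
    intro hdvd
    exact absurd (Nat.le_of_dvd hn hdvd) (by omega)
  classical
  set k := Nat.find hex with hkdef
  have hknd : ¬ Nat.nth Nat.Prime k ∣ n := Nat.find_spec hex
  have hdvd : ∀ i < k, Nat.nth Nat.Prime i ∣ n := by
    intro i hi
    have := Nat.find_min hex hi
    simpa using this
  have hk4 : 4 ≤ k := by
    by_contra h4
    push_neg at h4
    interval_cases k
    · exact hknd (nth_prime_0 ▸ dvd_trans (by norm_num) h)
    · exact hknd (nth_prime_1 ▸ dvd_trans (by norm_num) h)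
    · exact hknd (nth_prime_2 ▸ dvd_trans (by norm_num) h)
    · exact hknd (nth_prime_3 ▸ dvd_trans (by norm_num) h)
  have hinj : Set.InjOn (Nat.nth Nat.Prime) (Finset.range k) := by
    intro x _ y _ hxy
    by_contra hne
    rcases Nat.lt_or_ge x y with hlt | hge
    · exact absurd hxy ((Nat.nth_lt_nth hinf).mpr hlt).ne
    · have : y < x := by omega
      exact absurd hxy.symm ((Nat.nth_lt_nth hinf).mpr this).ne
  have hprod : primorialN k ∣ n := by
    have heq : primorialN k = ∏ p ∈ (Finset.range k).image (Nat.nth Nat.Prime), p := by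
      unfold primorialN
      exact (Finset.prod_image (f := fun p => p) hinj).symm
    rw [heq]
    refine Finset.prod_primes_dvd n ?_ ?_
    · intro a ha
      obtain ⟨i, _, rfl⟩ := Finset.mem_image.mp ha
      exact (Nat.prime_nth_prime i).prime
    · intro a ha
      obtain ⟨i, hi, rfl⟩ := Finset.mem_image.mp ha
      exact hdvd i (Finset.mem_range.mp hi)
  set p := Nat.nth Nat.Prime k with hpdef
  have hpp : p.Prime := Nat.prime_nth_prime k
  refine ⟨p ^ 2, ?_, ?_, ?_, ?_⟩
  · have := hpp.two_le; nlinarith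
  · calc p ^ 2 ≤ primorialN k := primorial_lower k hk4
      _ ≤ n := Nat.le_of_dvd hn hprod
  · exact Nat.Coprime.pow_left 2 (hpp.coprime_iff_not_dvd.mpr hknd)
  · exact Nat.Prime.not_prime_pow le_rfl

lemma two_le_phiT {n m : ℕ} (h2 : 2 ≤ m) (hmn : m ≤ n) (hg : Nat.gcd m n = 1)
    (hp : ¬ m.Prime) : 2 ≤ phiT n := by
  have hsub : ({1, m} : Finset ℕ) ⊆
      (Finset.Icc 1 n).filter (fun m => Nat.gcd m n = 1 ∧ ¬ m.Prime) := by
    intro x hx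
    simp only [Finset.mem_insert, Finset.mem_singleton] at hx
    rcases hx with rfl | rfl
    · simp only [Finset.mem_filter, Finset.mem_Icc]
      exact ⟨⟨le_rfl, by omega⟩, Nat.gcd_one_left n, Nat.not_prime_one⟩
    · simp only [Finset.mem_filter, Finset.mem_Icc]
      exact ⟨⟨by omega, hmn⟩, hg, hp⟩
  have hcard : ({1, m} : Finset ℕ).card = 2 := by
    rw [Finset.card_insert_of_notMem (by simp; omega), Finset.card_singleton]
  calc 2 = ({1, m} : Finset ℕ).card := hcard.symm
    _ ≤ _ := Finset.card_le_card hsub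

theorem stmt6 (n : ℕ) (hn : 0 < n) :
    phiT n = 1 ↔ n ∈ ({1, 2, 3, 4, 6, 8, 12, 18, 24, 30} : Finset ℕ) := by
  constructor
  · intro h
    by_contra hmem
    simp only [Finset.mem_insert, Finset.mem_singleton] at hmem
    push_neg at hmem
    obtain ⟨e1, e2, e3, e4, e5, e6, e7, e8, e9, e10⟩ := hmem
    have hex : ∃ m, 2 ≤ m ∧ m ≤ n ∧ Nat.gcd m n = 1 ∧ ¬ m.Prime := by
      by_cases h2 : 2 ∣ n
      · by_cases h3 : 3 ∣ n
        · by_cases h5 : 5 ∣ n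
          · by_cases h7 : 7 ∣ n
            · exact exists_comp n hn (by omega)
            · refine ⟨49, by norm_num, by omega, ?_, by norm_num⟩
              have hc : Nat.Coprime 7 n := ((by norm_num : Nat.Prime 7).coprime_iff_not_dvd).mpr h7
              simpa using hc.pow_left 2
          · refine ⟨25, by norm_num, by omega, ?_, by norm_num⟩
            have hc : Nat.Coprime 5 n := ((by norm_num : Nat.Prime 5).coprime_iff_not_dvd).mpr h5
            simpa using hc.pow_left 2
        · refine ⟨9, by norm_num, by omega, ?_, by norm_num⟩
          have hc : Nat.Coprime 3 n := ((by norm_num : Nat.Prime 3).coprime_iff_not_dvd).mpr h3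
          simpa using hc.pow_left 2
      · refine ⟨4, by norm_num, by omega, ?_, by norm_num⟩
        have hc : Nat.Coprime 2 n := (Nat.prime_two.coprime_iff_not_dvd).mpr h2
        simpa using hc.pow_left 2
    obtain ⟨m, hm1, hm2, hm3, hm4⟩ := hex
    have := two_le_phiT hm1 hm2 hm3 hm4
    omega
  · intro h
    fin_cases h <;> decide
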